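/- Let λ ∈ ℝ^n be nonzero with λ_1 ≥ λ_2 ≥ … ≥ λ_n ≥ 0, let τ > 0 and b ∈ ℝ^n, and let ψ(y) = ⟨Π_C(yλ + b), λ⟩ − τ. Then for every y ∈ ℝ: (i) M(y) is nonempty; (ii) M ≥ 0 for every M ∈ M(y); and (iii) there exists δ > 0 such that for all y′ ∈ ℝ with |y′ − y| < δ, M(y′) ⊆ M(y) and ψ(y′) − ψ(y) − M(y′ − y) = 0 for every M ∈ M(y′). -/

import Mathlib

open Matrix

/-- The matrix `B` with `(Bx)_i = x_i − x_{i+1}` for `1 ≤ i ≤ n−1` and `(Bx)_n = x_n`. -/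
def Bmat (n : ℕ) : Matrix (Fin n) (Fin n) ℝ :=
  Matrix.of fun i j => if j = i then 1 else if (j : ℕ) = (i : ℕ) + 1 then -1 else 0

/-- `B_Γ`, the submatrix of `B` formed by the rows indexed by `Γ`. -/
def subRows {n : ℕ} (Γ : Finset (Fin n)) : Matrix {i // i ∈ Γ} (Fin n) ℝ :=
  Matrix.of fun i j => Bmat n i.1 j

/-- `H = I_n − B_Γᵀ (B_Γ B_Γᵀ)⁻¹ B_Γ`, the orthogonal projection onto the null space of
`B_Γ` (equal to `I_n` when `Γ = ∅`). -/
noncomputable def Hmat {n : ℕ} (Γ : Finset (Fin n)) : Matrix (Fin n) (Fin n) ℝ :=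
  1 - (subRows Γ)ᵀ * (subRows Γ * (subRows Γ)ᵀ)⁻¹ * subRows Γ

/-- The monotone nonnegative cone `C = {x : x₁ ≥ x₂ ≥ … ≥ xₙ ≥ 0}`. -/
def coneC (n : ℕ) : Set (Fin n → ℝ) :=
  {x | (∀ i j : Fin n, i ≤ j → x j ≤ x i) ∧ ∀ i, 0 ≤ x i}

/-- `Pc` is the Euclidean (metric) projection onto the cone `C`:
`Pc d` minimizes `½‖x − d‖²` over `x ∈ C`. -/
def IsProjC {n : ℕ} (Pc : (Fin n → ℝ) → Fin n → ℝ) : Prop :=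
  ∀ d : Fin n → ℝ, Pc d ∈ coneC n ∧
    ∀ x ∈ coneC n, (1/2) * ∑ i, (Pc d i - d i)^2 ≤ (1/2) * ∑ i, (x i - d i)^2

/-- `z(d) = (Bᵀ)⁻¹(d − Π_C(d))`. -/
noncomputable def zdual {n : ℕ} (Pc : (Fin n → ℝ) → Fin n → ℝ) (d : Fin n → ℝ) :
    Fin n → ℝ :=
  Matrix.mulVec ((Bmat n)ᵀ)⁻¹ (d - Pc d)

/-- `K(d) = {Γ : Supp(z(d)) ⊆ Γ ⊆ I(Π_C(d))}`. -/
def Kset {n : ℕ} (Pc : (Fin n → ℝ) → Fin n → ℝ) (d : Fin n → ℝ) :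
    Set (Finset (Fin n)) :=
  {Γ | (∀ i, zdual Pc d i ≠ 0 → i ∈ Γ) ∧ ∀ i ∈ Γ, (Bmat n).mulVec (Pc d) i = 0}

/-- `H(d) = {I_n − B_Γᵀ(B_Γ B_Γᵀ)⁻¹ B_Γ : Γ ∈ K(d)}`, the HS-Jacobian of `Π_C` at `d`. -/
def Hset {n : ℕ} (Pc : (Fin n → ℝ) → Fin n → ℝ) (d : Fin n → ℝ) :
    Set (Matrix (Fin n) (Fin n) ℝ) :=
  {H | ∃ Γ ∈ Kset Pc d, H = Hmat Γ}

/-- `M(y) = {λᵀHλ : H ∈ H(yλ + b)}`. -/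
def Mset {n : ℕ} (Pc : (Fin n → ℝ) → Fin n → ℝ) (lam b : Fin n → ℝ) (y : ℝ) : Set ℝ :=
  {m | ∃ H ∈ Hset Pc (y • lam + b), m = dotProduct lam (H.mulVec lam)}

/-- The dual objective `φ(y) = ½‖Π_C(yλ + b)‖² − yτ − ½‖b‖²`. -/
noncomputable def phiFun {n : ℕ} (Pc : (Fin n → ℝ) → Fin n → ℝ) (lam b : Fin n → ℝ)
    (τ : ℝ) : ℝ → ℝ :=
  fun y => (1/2) * ∑ i, (Pc (y • lam + b) i)^2 - y * τ - (1/2) * ∑ i, (b i)^2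

/-- `ψ(y) = ⟨Π_C(yλ + b), λ⟩ − τ` (the derivative `φ′` of the dual objective). -/
noncomputable def psiFun {n : ℕ} (Pc : (Fin n → ℝ) → Fin n → ℝ) (lam b : Fin n → ℝ)
    (τ : ℝ) : ℝ → ℝ :=
  fun y => (∑ i, Pc (y • lam + b) i * lam i) - τ

/-- The Euclidean norm on `ℝⁿ`. -/
noncomputable def enorm {n : ℕ} (x : Fin n → ℝ) : ℝ :=
  Real.sqrt (∑ i, (x i)^2)

section Aux

open Finset

variable {n : ℕ}

/-! ### Basic facts about `Bmat` -/

lemma Bmat_det (n : ℕ) : (Bmat n).det = 1 := by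
  rw [Matrix.det_of_upperTriangular]
  · simp [Bmat]
  · intro i j hij
    have hji : (j : ℕ) < (i : ℕ) := hij
    simp only [Bmat, Matrix.of_apply]
    rw [if_neg (by omega : ¬ j = i), if_neg (by omega)]

lemma Bmat_det_isUnit (n : ℕ) : IsUnit (Bmat n).det := by
  rw [Bmat_det]; exact isUnit_one

lemma BmatT_det_isUnit (n : ℕ) : IsUnit ((Bmat n)ᵀ).det := by
  rw [Matrix.det_transpose, Bmat_det]; exact isUnit_one

lemma Bmat_mulVec (x : Fin n → ℝ) (i : Fin n) :
    (Bmat n).mulVec x i = x i - ∑ j : Fin n, if (j : ℕ) = (i : ℕ) + 1 then x j else 0 := by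
  have h1 : ∀ j : Fin n, Bmat n i j * x j
      = (if j = i then x j else 0) - (if (j : ℕ) = (i : ℕ) + 1 then x j else 0) := by
    intro j
    by_cases h : j = i
    · subst h
      simp [Bmat]
    · by_cases h2 : (j : ℕ) = (i : ℕ) + 1
      · simp [Bmat, h, h2]
      · simp [Bmat, h, h2]
  simp only [Matrix.mulVec, dotProduct]
  rw [Finset.sum_congr rfl (fun j _ => h1 j), Finset.sum_sub_distrib, Finset.sum_ite_eq'
    Finset.univ i x]
  simp

lemma Bmat_mulVec_succ (x : Fin n → ℝ) (i : Fin n) (h : (i : ℕ) + 1 < n) :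
    (Bmat n).mulVec x i = x i - x ⟨(i : ℕ) + 1, h⟩ := by
  rw [Bmat_mulVec]
  congr 1
  rw [Finset.sum_eq_single (⟨(i : ℕ) + 1, h⟩ : Fin n)]
  · simp
  · intro j _ hj
    rw [if_neg]
    intro hc
    exact hj (Fin.ext hc)
  · simp

lemma Bmat_mulVec_last (x : Fin n → ℝ) (i : Fin n) (h : ¬ ((i : ℕ) + 1 < n)) :
    (Bmat n).mulVec x i = x i := by
  rw [Bmat_mulVec]
  have : ∀ j : Fin n, (if (j : ℕ) = (i : ℕ) + 1 then x j else 0) = 0 := by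
    intro j
    rw [if_neg]
    have := j.isLt
    omega
  rw [Finset.sum_congr rfl (fun j _ => this j)]
  simp

lemma Bmat_absRowSum_le (i : Fin n) : ∑ j : Fin n, |Bmat n i j| ≤ 2 := by
  have h1 : ∀ j : Fin n, |Bmat n i j|
      ≤ (if j = i then (1:ℝ) else 0) + (if (j : ℕ) = (i : ℕ) + 1 then 1 else 0) := by
    intro j
    simp only [Bmat, Matrix.of_apply]
    split_ifs <;> norm_num
  calc ∑ j : Fin n, |Bmat n i j|
      ≤ ∑ j : Fin n, ((if j = i then (1:ℝ) else 0) + (if (j : ℕ) = (i : ℕ) + 1 then 1 else 0)) :=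
        Finset.sum_le_sum fun j _ => h1 j
    _ = 1 + ∑ j : Fin n, (if (j : ℕ) = (i : ℕ) + 1 then (1:ℝ) else 0) := by
        rw [Finset.sum_add_distrib, Finset.sum_ite_eq' Finset.univ i (fun _ => (1:ℝ))]
        simp
    _ ≤ 1 + 1 := by
        gcongr
        by_cases h : (i : ℕ) + 1 < n
        · rw [Finset.sum_eq_single (⟨(i : ℕ) + 1, h⟩ : Fin n)]
          · simp
          · intro j _ hj
            rw [if_neg]
            intro hc
            exact hj (Fin.ext hc)
          · simp
        · rw [Finset.sum_eq_zero]
          · norm_num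
          · intro j _
            rw [if_neg]
            have := j.isLt
            omega
    _ = 2 := by norm_num

lemma cone_Bmat_mulVec_nonneg {u : Fin n → ℝ} (hu : u ∈ coneC n) (i : Fin n) :
    0 ≤ (Bmat n).mulVec u i := by
  by_cases h : (i : ℕ) + 1 < n
  · rw [Bmat_mulVec_succ u i h]
    have : i ≤ (⟨(i : ℕ) + 1, h⟩ : Fin n) := by
      simp [Fin.le_def]
    linarith [hu.1 i ⟨(i : ℕ) + 1, h⟩ this]
  · rw [Bmat_mulVec_last u i h]
    exact hu.2 i

/-! ### Cone membership lemmas -/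

lemma coneC_zero (n : ℕ) : (0 : Fin n → ℝ) ∈ coneC n :=
  ⟨fun _ _ _ => le_refl 0, fun _ => le_refl 0⟩

lemma coneC_smul {x : Fin n → ℝ} (hx : x ∈ coneC n) {c : ℝ} (hc : 0 ≤ c) :
    c • x ∈ coneC n := by
  refine ⟨fun i j hij => ?_, fun i => ?_⟩
  · exact mul_le_mul_of_nonneg_left (hx.1 i j hij) hc
  · exact mul_nonneg hc (hx.2 i)

lemma coneC_comb {x u : Fin n → ℝ} (hx : x ∈ coneC n) (hu : u ∈ coneC n)
    {t : ℝ} (h0 : 0 ≤ t) (h1 : t ≤ 1) : (fun i => u i + t * (x i - u i)) ∈ coneC n := by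
  refine ⟨fun i j hij => ?_, fun i => ?_⟩
  · have h1' : 0 ≤ 1 - t := by linarith
    have ha := hx.1 i j hij
    have hb := hu.1 i j hij
    show u j + t * (x j - u j) ≤ u i + t * (x i - u i)
    nlinarith
  · show 0 ≤ u i + t * (x i - u i)
    nlinarith [hx.2 i, hu.2 i]

/-! ### Variational inequality for the projection -/

variable {Pc : (Fin n → ℝ) → Fin n → ℝ}

lemma proj_vi (hPc : IsProjC Pc)
    (d : Fin n → ℝ) {x : Fin n → ℝ} (hx : x ∈ coneC n) :
    ∑ i, (d i - Pc d i) * (x i - Pc d i) ≤ 0 := by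
  by_contra hcon
  push_neg at hcon
  set u := Pc d with hu
  set ε := ∑ i, (d i - u i) * (x i - u i) with hε
  set s := ∑ i, (x i - u i)^2 with hs
  have hs0 : 0 ≤ s := Finset.sum_nonneg fun i _ => sq_nonneg _
  have hsne : s ≠ 0 := by
    intro h
    rw [hs] at h
    have hz := (Finset.sum_eq_zero_iff_of_nonneg
      (fun (i : Fin n) (_ : i ∈ Finset.univ) => sq_nonneg (x i - u i))).mp h
    have hxu : ∀ i, x i = u i := by
      intro i
      have := hz i (Finset.mem_univ i)
      nlinarith [sq_nonneg (x i - u i)]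
    have : ε = 0 := by
      rw [hε]
      apply Finset.sum_eq_zero
      intro i _
      rw [hxu i]; ring
    linarith
  have hspos : 0 < s := lt_of_le_of_ne hs0 (Ne.symm hsne)
  set t := min 1 (ε / s) with ht
  have ht0 : 0 < t := lt_min one_pos (div_pos hcon hspos)
  have ht1 : t ≤ 1 := min_le_left _ _
  have hts : t * s ≤ ε := by
    calc t * s ≤ (ε / s) * s := by
          apply mul_le_mul_of_nonneg_right (min_le_right _ _) hs0
      _ = ε := by field_simp
  have hmem := coneC_comb hx (hPc d).1 (le_of_lt ht0) ht1
  have hle := (hPc d).2 _ hmem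
  have hexp : ∑ i, ((u i + t * (x i - u i)) - d i)^2
      = ∑ i, (u i - d i)^2 - 2 * t * ε + t^2 * s := by
    rw [hε, hs, Finset.mul_sum, Finset.mul_sum, ← Finset.sum_sub_distrib, ← Finset.sum_add_distrib]
    apply Finset.sum_congr rfl
    intro i _
    ring
  rw [hexp] at hle
  have h2 : t * s < 2 * ε := lt_of_le_of_lt hts (by linarith)
  have h3 : t * (t * s) < t * (2 * ε) := mul_lt_mul_of_pos_left h2 ht0
  nlinarith

lemma proj_orth (hPc : IsProjC Pc) (d : Fin n → ℝ) :
    ∑ i, (d i - Pc d i) * Pc d i = 0 := by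
  have h0 := proj_vi hPc d (coneC_zero n)
  have h2 := proj_vi hPc d (coneC_smul (hPc d).1 (by norm_num : (0:ℝ) ≤ 2))
  simp only [Pi.zero_apply, zero_sub, mul_neg] at h0
  rw [Finset.sum_neg_distrib] at h0
  have e2 : ∑ i, (d i - Pc d i) * (((2:ℝ) • Pc d) i - Pc d i)
      = ∑ i, (d i - Pc d i) * Pc d i := by
    apply Finset.sum_congr rfl
    intro i _
    simp only [Pi.smul_apply, smul_eq_mul]
    ring
  rw [e2] at h2
  linarith

lemma proj_polar (hPc : IsProjC Pc) (d : Fin n → ℝ) {x : Fin n → ℝ} (hx : x ∈ coneC n) :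
    ∑ i, (d i - Pc d i) * x i ≤ 0 := by
  have h1 := proj_vi hPc d hx
  have h2 := proj_orth hPc d
  have e : ∑ i, (d i - Pc d i) * x i
      = (∑ i, (d i - Pc d i) * (x i - Pc d i)) + ∑ i, (d i - Pc d i) * Pc d i := by
    rw [← Finset.sum_add_distrib]
    apply Finset.sum_congr rfl
    intro i _
    ring
  rw [e, h2]
  linarith

lemma proj_nonexpansive (hPc : IsProjC Pc) (d d' : Fin n → ℝ) :
    ∑ i, (Pc d' i - Pc d i)^2 ≤ ∑ i, (d' i - d i)^2 := by
  have h1 := proj_vi hPc d (hPc d').1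
  have h2 := proj_vi hPc d' (hPc d).1
  have hsum : ∑ i, (Pc d' i - Pc d i)^2 ≤ ∑ i, (d' i - d i) * (Pc d' i - Pc d i) := by
    have e : ∑ i, ((d' i - d i) * (Pc d' i - Pc d i) - (Pc d' i - Pc d i)^2)
        = ∑ i, (-((d' i - Pc d' i) * (Pc d i - Pc d' i))
            - (d i - Pc d i) * (Pc d' i - Pc d i)) :=
      Finset.sum_congr rfl fun i _ => by ring
    rw [Finset.sum_sub_distrib, Finset.sum_sub_distrib, Finset.sum_neg_distrib] at e
    linarith
  have hCS := Finset.sum_mul_sq_le_sq_mul_sq Finset.univ (fun i => d' i - d i)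
    (fun i => Pc d' i - Pc d i)
  have hS0 : (0:ℝ) ≤ ∑ i, (Pc d' i - Pc d i)^2 := Finset.sum_nonneg fun i _ => sq_nonneg _
  rcases eq_or_lt_of_le hS0 with h | h
  · linarith [Finset.sum_nonneg (fun (i : Fin n) (_ : i ∈ Finset.univ) =>
      sq_nonneg (d' i - d i))]
  · nlinarith

/-! ### The dual vector `z(d)` -/

lemma BT_mulVec_zdual (Pc : (Fin n → ℝ) → Fin n → ℝ) (d : Fin n → ℝ) :
    ((Bmat n)ᵀ).mulVec (zdual Pc d) = d - Pc d := by
  unfold zdual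
  rw [Matrix.mulVec_mulVec, Matrix.mul_nonsing_inv _ (BmatT_det_isUnit n), Matrix.one_mulVec]

lemma dot_zdual_BmulVec (Pc : (Fin n → ℝ) → Fin n → ℝ) (d x : Fin n → ℝ) :
    dotProduct (zdual Pc d) ((Bmat n).mulVec x)
      = ∑ i, (d i - Pc d i) * x i := by
  rw [Matrix.dotProduct_mulVec, ← Matrix.mulVec_transpose, BT_mulVec_zdual]
  simp [dotProduct]

lemma zdual_nonpos (hPc : IsProjC Pc) (d : Fin n → ℝ) (k : Fin n) :
    zdual Pc d k ≤ 0 := by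
  set x : Fin n → ℝ := fun j => if (j : ℕ) ≤ (k : ℕ) then 1 else 0 with hxdef
  have hxC : x ∈ coneC n := by
    constructor
    · intro i j hij
      have hij' : (i : ℕ) ≤ (j : ℕ) := hij
      simp only [hxdef]
      split_ifs <;> first | (exfalso; omega) | norm_num
    · intro i
      simp only [hxdef]
      split_ifs <;> norm_num
  have hBx : (Bmat n).mulVec x = fun i => if i = k then 1 else 0 := by
    funext i
    by_cases h : (i : ℕ) + 1 < n
    · rw [Bmat_mulVec_succ x i h]
      simp only [hxdef, Fin.ext_iff]
      split_ifs <;> first | (exfalso; omega) | norm_num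
    · rw [Bmat_mulVec_last x i h]
      have := i.isLt
      have := k.isLt
      simp only [hxdef, Fin.ext_iff]
      split_ifs <;> first | (exfalso; omega) | norm_num
  have h1 : dotProduct (zdual Pc d) ((Bmat n).mulVec x) = zdual Pc d k := by
    rw [hBx]
    simp only [dotProduct, mul_ite, mul_one, mul_zero]
    rw [Finset.sum_ite_eq' Finset.univ k (zdual Pc d)]
    simp
  rw [dot_zdual_BmulVec] at h1
  rw [← h1]
  exact proj_polar hPc d hxC

lemma zdual_compl (hPc : IsProjC Pc) (d : Fin n → ℝ) (i : Fin n)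
    (hz : zdual Pc d i ≠ 0) : (Bmat n).mulVec (Pc d) i = 0 := by
  have hsum : ∑ j, zdual Pc d j * (Bmat n).mulVec (Pc d) j = 0 := by
    have := dot_zdual_BmulVec Pc d (Pc d)
    rw [proj_orth hPc d] at this
    simpa [dotProduct] using this
  have hterm : ∀ j ∈ Finset.univ, zdual Pc d j * (Bmat n).mulVec (Pc d) j ≤ 0 :=
    fun j _ => mul_nonpos_of_nonpos_of_nonneg (zdual_nonpos hPc d j)
      (cone_Bmat_mulVec_nonneg (hPc d).1 j)
  have hall := (Finset.sum_eq_zero_iff_of_nonpos hterm).mp hsum i (Finset.mem_univ i)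
  rcases mul_eq_zero.mp hall with h | h
  · exact absurd h hz
  · exact h

end Aux

section Aux2

open Finset

variable {n : ℕ}

lemma subRows_apply (Γ : Finset (Fin n)) (i : {i // i ∈ Γ}) (j : Fin n) :
    subRows Γ i j = Bmat n i.1 j := rfl

lemma subRows_mulVec (Γ : Finset (Fin n)) (x : Fin n → ℝ) (i : {i // i ∈ Γ}) :
    (subRows Γ).mulVec x i = (Bmat n).mulVec x i.1 := rfl

lemma BT_mulVec_support (Γ : Finset (Fin n)) (w : Fin n → ℝ)
    (hw : ∀ i, i ∉ Γ → w i = 0) :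
    ((Bmat n)ᵀ).mulVec w = ((subRows Γ)ᵀ).mulVec (fun i => w i.1) := by
  funext j
  simp only [Matrix.mulVec, dotProduct, Matrix.transpose_apply, subRows_apply]
  rw [← Finset.sum_subset (Finset.subset_univ Γ)
    (fun i _ hi => by rw [hw i hi, mul_zero]), Finset.univ_eq_attach,
    ← Finset.sum_attach Γ (fun i => Bmat n i j * w i)]

lemma gram_isUnit (Γ : Finset (Fin n)) : IsUnit (subRows Γ * (subRows Γ)ᵀ) := by
  rw [← Matrix.mulVec_injective_iff_isUnit]
  have hker : ∀ v : {i // i ∈ Γ} → ℝ, (subRows Γ * (subRows Γ)ᵀ).mulVec v = 0 → v = 0 := by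
    intro v hv
    have h1 : dotProduct v ((subRows Γ * (subRows Γ)ᵀ).mulVec v)
        = dotProduct ((subRows Γ)ᵀ.mulVec v) ((subRows Γ)ᵀ.mulVec v) := by
      rw [← Matrix.mulVec_mulVec, Matrix.dotProduct_mulVec, ← Matrix.mulVec_transpose]
    rw [hv, dotProduct_zero] at h1
    have h2 : ∀ j, (subRows Γ)ᵀ.mulVec v j = 0 := by
      intro j
      have hnn : ∀ j ∈ Finset.univ, 0 ≤ (subRows Γ)ᵀ.mulVec v j * (subRows Γ)ᵀ.mulVec v j :=
        fun j _ => mul_self_nonneg _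
      have := (Finset.sum_eq_zero_iff_of_nonneg hnn).mp h1.symm j (Finset.mem_univ j)
      exact mul_self_eq_zero.mp this
    -- extend v by zero
    set w : Fin n → ℝ := fun i => if h : i ∈ Γ then v ⟨i, h⟩ else 0 with hwdef
    have hw0 : ∀ i, i ∉ Γ → w i = 0 := fun i hi => dif_neg hi
    have hwv : (fun (i : {i // i ∈ Γ}) => w i.1) = v := by
      funext i
      simp only [hwdef, dif_pos i.2]
    have hBw : ((Bmat n)ᵀ).mulVec w = 0 := by
      rw [BT_mulVec_support Γ w hw0, hwv]
      funext j
      exact h2 j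
    have hinj : Function.Injective ((Bmat n)ᵀ).mulVec :=
      Matrix.mulVec_injective_iff_isUnit.mpr
        ((Matrix.isUnit_iff_isUnit_det _).mpr (BmatT_det_isUnit n))
    have hw00 : w = 0 := by
      apply hinj
      rw [hBw, Matrix.mulVec_zero]
    funext i
    have := congrFun hw00 i.1
    simpa [hwdef, dif_pos i.2] using this
  intro v v' hvv
  have : (subRows Γ * (subRows Γ)ᵀ).mulVec (v - v') = 0 := by
    rw [Matrix.mulVec_sub, hvv, sub_self]
  have := hker _ this
  exact sub_eq_zero.mp this

lemma gram_det_isUnit (Γ : Finset (Fin n)) : IsUnit (subRows Γ * (subRows Γ)ᵀ).det :=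
  (Matrix.isUnit_iff_isUnit_det _).mp (gram_isUnit Γ)

lemma gram_transpose (Γ : Finset (Fin n)) :
    (subRows Γ * (subRows Γ)ᵀ)ᵀ = subRows Γ * (subRows Γ)ᵀ := by
  rw [Matrix.transpose_mul, Matrix.transpose_transpose]

lemma Hmat_transpose (Γ : Finset (Fin n)) : (Hmat Γ)ᵀ = Hmat Γ := by
  unfold Hmat
  rw [Matrix.transpose_sub, Matrix.transpose_one, Matrix.transpose_mul, Matrix.transpose_mul,
    Matrix.transpose_transpose, Matrix.transpose_nonsing_inv, gram_transpose, Matrix.mul_assoc]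

lemma Hmat_mul_subRowsT (Γ : Finset (Fin n)) : Hmat Γ * (subRows Γ)ᵀ = 0 := by
  unfold Hmat
  rw [Matrix.sub_mul, Matrix.one_mul]
  rw [Matrix.mul_assoc ((subRows Γ)ᵀ * (subRows Γ * (subRows Γ)ᵀ)⁻¹) (subRows Γ) ((subRows Γ)ᵀ)]
  rw [Matrix.mul_assoc ((subRows Γ)ᵀ) ((subRows Γ * (subRows Γ)ᵀ)⁻¹) (subRows Γ * (subRows Γ)ᵀ)]
  rw [Matrix.nonsing_inv_mul _ (gram_det_isUnit Γ), Matrix.mul_one, sub_self]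

lemma Hmat_idem (Γ : Finset (Fin n)) : Hmat Γ * Hmat Γ = Hmat Γ := by
  have h : Hmat Γ * ((subRows Γ)ᵀ * (subRows Γ * (subRows Γ)ᵀ)⁻¹ * subRows Γ) = 0 := by
    rw [← Matrix.mul_assoc, ← Matrix.mul_assoc, Hmat_mul_subRowsT, Matrix.zero_mul,
      Matrix.zero_mul]
  conv_lhs => rw [show Hmat Γ * Hmat Γ
    = Hmat Γ * 1 - Hmat Γ * ((subRows Γ)ᵀ * (subRows Γ * (subRows Γ)ᵀ)⁻¹ * subRows Γ) by
      rw [← Matrix.mul_sub]; rfl]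
  rw [h, Matrix.mul_one, sub_zero]

lemma dot_Hmat_nonneg (Γ : Finset (Fin n)) (v : Fin n → ℝ) :
    0 ≤ dotProduct v ((Hmat Γ).mulVec v) := by
  have h : dotProduct v ((Hmat Γ).mulVec v)
      = dotProduct ((Hmat Γ).mulVec v) ((Hmat Γ).mulVec v) := by
    conv_lhs => rw [← Hmat_idem Γ, ← Matrix.mulVec_mulVec]
    rw [Matrix.dotProduct_mulVec, ← Matrix.mulVec_transpose, Hmat_transpose]
  rw [h]
  exact Finset.sum_nonneg fun i _ => mul_self_nonneg _

lemma proj_eq_Hmat_mulVec {Pc : (Fin n → ℝ) → Fin n → ℝ} (d : Fin n → ℝ)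
    {Γ : Finset (Fin n)} (hΓ : Γ ∈ Kset Pc d) :
    Pc d = (Hmat Γ).mulVec d := by
  have hz0 : ∀ i, i ∉ Γ → zdual Pc d i = 0 := by
    intro i hi
    by_contra h
    exact hi (hΓ.1 i h)
  have hd : d = Pc d + ((Bmat n)ᵀ).mulVec (zdual Pc d) := by
    rw [BT_mulVec_zdual]
    abel
  have hsupp := BT_mulVec_support Γ (zdual Pc d) hz0
  have hAu : (subRows Γ).mulVec (Pc d) = 0 := by
    funext i
    rw [subRows_mulVec]
    exact hΓ.2 i.1 i.2
  have hfix : (Hmat Γ).mulVec (Pc d) = Pc d := by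
    unfold Hmat
    rw [Matrix.sub_mulVec, Matrix.one_mulVec, Matrix.mul_assoc, ← Matrix.mulVec_mulVec,
      ← Matrix.mulVec_mulVec, hAu, Matrix.mulVec_zero, Matrix.mulVec_zero, sub_zero]
  have hkill : (Hmat Γ).mulVec (((subRows Γ)ᵀ).mulVec (fun i => zdual Pc d i.1)) = 0 := by
    rw [Matrix.mulVec_mulVec, Hmat_mul_subRowsT, Matrix.zero_mulVec]
  conv_rhs => rw [hd]
  rw [Matrix.mulVec_add, hfix, hsupp, hkill, add_zero]

end Aux2

section Aux3

open Finset

variable {n : ℕ} {Pc : (Fin n → ℝ) → Fin n → ℝ}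

lemma abs_le_sqrt_sum (v : Fin n → ℝ) (i : Fin n) :
    |v i| ≤ Real.sqrt (∑ j, v j ^ 2) := by
  rw [← Real.sqrt_sq_eq_abs]
  apply Real.sqrt_le_sqrt
  exact Finset.single_le_sum (fun j (_ : j ∈ Finset.univ) => sq_nonneg (v j))
    (Finset.mem_univ i)

lemma proj_coord_lip (hPc : IsProjC Pc) (d d' : Fin n → ℝ) (i : Fin n) :
    |Pc d' i - Pc d i| ≤ Real.sqrt (∑ j, (d' j - d j)^2) :=
  (abs_le_sqrt_sum (fun j => Pc d' j - Pc d j) i).trans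
    (Real.sqrt_le_sqrt (proj_nonexpansive hPc d d'))

lemma abs_sub_le_abs_add_abs (a b : ℝ) : |a - b| ≤ |a| + |b| := by
  rw [sub_eq_add_neg]
  exact (abs_add_le _ _).trans (by rw [abs_neg])

end Aux3

/-- with `ψ(y) = ⟨Π_C(yλ + b), λ⟩ − τ`, for every `y`:
(i) `M(y)` is nonempty; (ii) every `M ∈ M(y)` is nonnegative; and (iii) there is
`δ > 0` such that for all `y'` with `|y' − y| < δ`, `M(y') ⊆ M(y)` and
`ψ(y') − ψ(y) − M(y' − y) = 0` for every `M ∈ M(y')`. -/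
theorem stmt12 {n : ℕ} (hn : 0 < n) (lam : Fin n → ℝ)
    (hmono : ∀ i j : Fin n, i ≤ j → lam j ≤ lam i)
    (hnonneg : ∀ i, 0 ≤ lam i) (hlam : lam ≠ 0)
    (τ : ℝ) (hτ : 0 < τ) (b : Fin n → ℝ)
    (Pc : (Fin n → ℝ) → Fin n → ℝ) (hPc : IsProjC Pc) (y : ℝ) :
    (Mset Pc lam b y).Nonempty ∧
    (∀ M ∈ Mset Pc lam b y, 0 ≤ M) ∧
    ∃ δ > (0:ℝ), ∀ y' : ℝ, |y' - y| < δ →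
      Mset Pc lam b y' ⊆ Mset Pc lam b y ∧
      ∀ M ∈ Mset Pc lam b y',
        psiFun Pc lam b τ y' - psiFun Pc lam b τ y - M * (y' - y) = 0 := by
  classical
  -- Part (i): nonemptiness
  have hK0 : (Finset.univ.filter (fun i => zdual Pc (y • lam + b) i ≠ 0))
      ∈ Kset Pc (y • lam + b) := by
    constructor
    · intro i hi
      exact Finset.mem_filter.mpr ⟨Finset.mem_univ i, hi⟩
    · intro i hi
      exact zdual_compl hPc (y • lam + b) i (Finset.mem_filter.mp hi).2
  refine ⟨⟨_, ⟨Hmat _, ⟨_, hK0, rfl⟩, rfl⟩⟩, ?_, ?_⟩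
  · -- Part (ii): nonnegativity
    rintro M ⟨H, ⟨Γ, _, rfl⟩, rfl⟩
    exact dot_Hmat_nonneg Γ lam
  -- Part (iii)
  set L := Real.sqrt (∑ j, (lam j)^2) with hL
  have hL0 : 0 ≤ L := Real.sqrt_nonneg _
  have hlamL : ∀ j, |lam j| ≤ L := by
    intro j
    have := abs_le_sqrt_sum lam j
    rwa [hL]
  set Ci : Fin n → ℝ := fun i => ∑ j, |(((Bmat n)ᵀ)⁻¹) i j| with hCi
  have hCi0 : ∀ i, 0 ≤ Ci i := fun i => Finset.sum_nonneg fun j _ => abs_nonneg _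
  set ε1 : Fin n → ℝ := fun i =>
    if zdual Pc (y • lam + b) i = 0 then 1 else |zdual Pc (y • lam + b) i| with hε1def
  set ε2 : Fin n → ℝ := fun i =>
    if (Bmat n).mulVec (Pc (y • lam + b)) i = 0 then 1
    else |(Bmat n).mulVec (Pc (y • lam + b)) i| with hε2def
  have hε1pos : ∀ i, 0 < ε1 i := by
    intro i
    simp only [hε1def]
    split_ifs with h
    · norm_num
    · exact abs_pos.mpr h
  have hε2pos : ∀ i, 0 < ε2 i := by
    intro i
    simp only [hε2def]
    split_ifs with h
    · norm_num
    · exact abs_pos.mpr h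
  have hne : (Finset.univ : Finset (Fin n)).Nonempty := ⟨⟨0, hn⟩, Finset.mem_univ _⟩
  set δ := Finset.univ.inf' hne
    (fun i => min (ε1 i / (Ci i * (2*L) + 1)) (ε2 i / (2*L + 1))) with hδdef
  have hden1 : ∀ i, (0:ℝ) < Ci i * (2*L) + 1 := by
    intro i
    nlinarith [hCi0 i, hL0]
  have hden2 : (0:ℝ) < 2*L + 1 := by linarith
  have hδpos : 0 < δ := by
    rw [hδdef, Finset.lt_inf'_iff]
    intro i _
    exact lt_min (div_pos (hε1pos i) (hden1 i)) (div_pos (hε2pos i) hden2)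
  refine ⟨δ, hδpos, ?_⟩
  intro y' hy'
  -- coordinatewise Lipschitz bounds
  have hdd : ∀ j, (y' • lam + b) j - (y • lam + b) j = (y' - y) * lam j := by
    intro j
    simp only [Pi.add_apply, Pi.smul_apply, smul_eq_mul]
    ring
  have hsqrt : Real.sqrt (∑ j, ((y' • lam + b) j - (y • lam + b) j)^2) = |y' - y| * L := by
    have : ∑ j, ((y' • lam + b) j - (y • lam + b) j)^2 = (y'-y)^2 * ∑ j, (lam j)^2 := by
      rw [Finset.mul_sum]
      exact Finset.sum_congr rfl fun j _ => by rw [hdd j]; ring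
    rw [this, Real.sqrt_mul (sq_nonneg _), Real.sqrt_sq_eq_abs, hL]
  have hPcoord : ∀ i, |Pc (y' • lam + b) i - Pc (y • lam + b) i| ≤ |y' - y| * L := by
    intro i
    rw [← hsqrt]
    exact proj_coord_lip hPc (y • lam + b) (y' • lam + b) i
  have hdcoord : ∀ j, |(y' • lam + b) j - (y • lam + b) j| ≤ |y' - y| * L := by
    intro j
    rw [hdd j, abs_mul]
    exact mul_le_mul_of_nonneg_left (hlamL j) (abs_nonneg _)
  -- z bound
  have hzb : ∀ i, |zdual Pc (y' • lam + b) i - zdual Pc (y • lam + b) i|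
      ≤ Ci i * (2*L) * |y' - y| := by
    intro i
    have hrep : zdual Pc (y' • lam + b) i - zdual Pc (y • lam + b) i
        = ∑ j, (((Bmat n)ᵀ)⁻¹) i j * (((y' • lam + b) j - Pc (y' • lam + b) j)
            - ((y • lam + b) j - Pc (y • lam + b) j)) := by
      simp only [zdual, Matrix.mulVec, dotProduct, Pi.sub_apply]
      rw [← Finset.sum_sub_distrib]
      exact Finset.sum_congr rfl fun j _ => by ring
    rw [hrep]
    calc |∑ j, (((Bmat n)ᵀ)⁻¹) i j * (((y' • lam + b) j - Pc (y' • lam + b) j)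
            - ((y • lam + b) j - Pc (y • lam + b) j))|
        ≤ ∑ j, |(((Bmat n)ᵀ)⁻¹) i j * (((y' • lam + b) j - Pc (y' • lam + b) j)
            - ((y • lam + b) j - Pc (y • lam + b) j))| := Finset.abs_sum_le_sum_abs _ _
      _ ≤ ∑ j, |(((Bmat n)ᵀ)⁻¹) i j| * (2 * L * |y' - y|) := by
          apply Finset.sum_le_sum
          intro j _
          rw [abs_mul]
          apply mul_le_mul_of_nonneg_left _ (abs_nonneg _)
          have e : ((y' • lam + b) j - Pc (y' • lam + b) j)
              - ((y • lam + b) j - Pc (y • lam + b) j)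
              = ((y' • lam + b) j - (y • lam + b) j)
                - (Pc (y' • lam + b) j - Pc (y • lam + b) j) := by ring
          rw [e]
          calc |((y' • lam + b) j - (y • lam + b) j)
                - (Pc (y' • lam + b) j - Pc (y • lam + b) j)|
              ≤ |(y' • lam + b) j - (y • lam + b) j|
                + |Pc (y' • lam + b) j - Pc (y • lam + b) j| := abs_sub_le_abs_add_abs _ _
            _ ≤ |y' - y| * L + |y' - y| * L := add_le_add (hdcoord j) (hPcoord j)
            _ = 2 * L * |y' - y| := by ring
      _ = Ci i * (2*L) * |y' - y| := by
          rw [← Finset.sum_mul, hCi]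
          ring
  -- B∘Pc bound
  have hBb : ∀ i, |(Bmat n).mulVec (Pc (y' • lam + b)) i
      - (Bmat n).mulVec (Pc (y • lam + b)) i| ≤ (2*L) * |y' - y| := by
    intro i
    have hrep : (Bmat n).mulVec (Pc (y' • lam + b)) i
        - (Bmat n).mulVec (Pc (y • lam + b)) i
        = ∑ j, Bmat n i j * (Pc (y' • lam + b) j - Pc (y • lam + b) j) := by
      simp only [Matrix.mulVec, dotProduct]
      rw [← Finset.sum_sub_distrib]
      exact Finset.sum_congr rfl fun j _ => by ring
    rw [hrep]
    calc |∑ j, Bmat n i j * (Pc (y' • lam + b) j - Pc (y • lam + b) j)|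
        ≤ ∑ j, |Bmat n i j * (Pc (y' • lam + b) j - Pc (y • lam + b) j)| :=
          Finset.abs_sum_le_sum_abs _ _
      _ ≤ ∑ j, |Bmat n i j| * (|y' - y| * L) := by
          apply Finset.sum_le_sum
          intro j _
          rw [abs_mul]
          exact mul_le_mul_of_nonneg_left (hPcoord j) (abs_nonneg _)
      _ = (∑ j, |Bmat n i j|) * (|y' - y| * L) := by rw [Finset.sum_mul]
      _ ≤ 2 * (|y' - y| * L) := by
          apply mul_le_mul_of_nonneg_right (Bmat_absRowSum_le i)
          positivity
      _ = (2*L) * |y' - y| := by ring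
  -- stability of supports
  have hy'1 : ∀ i, zdual Pc (y • lam + b) i ≠ 0 → zdual Pc (y' • lam + b) i ≠ 0 := by
    intro i h0 hc
    have hδle : δ ≤ ε1 i / (Ci i * (2*L) + 1) :=
      (Finset.inf'_le _ (Finset.mem_univ i)).trans (min_le_left _ _)
    have hεi : ε1 i = |zdual Pc (y • lam + b) i| := if_neg h0
    have h1 : |zdual Pc (y' • lam + b) i - zdual Pc (y • lam + b) i| < ε1 i := by
      calc |zdual Pc (y' • lam + b) i - zdual Pc (y • lam + b) i|
          ≤ Ci i * (2*L) * |y' - y| := hzb i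
        _ ≤ (Ci i * (2*L) + 1) * |y' - y| := by
            nlinarith [abs_nonneg (y' - y), hCi0 i, hL0]
        _ < (Ci i * (2*L) + 1) * δ := by
            exact mul_lt_mul_of_pos_left hy' (hden1 i)
        _ ≤ ε1 i := by
            rw [mul_comm]
            exact (le_div_iff₀ (hden1 i)).mp hδle
    rw [hc, zero_sub, abs_neg, hεi] at h1
    exact lt_irrefl _ h1
  have hy'2 : ∀ i, (Bmat n).mulVec (Pc (y • lam + b)) i ≠ 0 →
      (Bmat n).mulVec (Pc (y' • lam + b)) i ≠ 0 := by
    intro i h0 hc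
    have hδle : δ ≤ ε2 i / (2*L + 1) :=
      (Finset.inf'_le _ (Finset.mem_univ i)).trans (min_le_right _ _)
    have hεi : ε2 i = |(Bmat n).mulVec (Pc (y • lam + b)) i| := if_neg h0
    have h1 : |(Bmat n).mulVec (Pc (y' • lam + b)) i
        - (Bmat n).mulVec (Pc (y • lam + b)) i| < ε2 i := by
      calc |(Bmat n).mulVec (Pc (y' • lam + b)) i
          - (Bmat n).mulVec (Pc (y • lam + b)) i|
          ≤ (2*L) * |y' - y| := hBb i
        _ ≤ (2*L + 1) * |y' - y| := by
            nlinarith [abs_nonneg (y' - y), hL0]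
        _ < (2*L + 1) * δ := mul_lt_mul_of_pos_left hy' hden2
        _ ≤ ε2 i := by
            rw [mul_comm]
            exact (le_div_iff₀ hden2).mp hδle
    rw [hc, zero_sub, abs_neg, hεi] at h1
    exact lt_irrefl _ h1
  have hKsub : Kset Pc (y' • lam + b) ⊆ Kset Pc (y • lam + b) := by
    intro Γ hΓ
    constructor
    · intro i hi
      exact hΓ.1 i (hy'1 i hi)
    · intro i hiΓ
      by_contra hB0
      exact (hy'2 i hB0) (hΓ.2 i hiΓ)
  constructor
  · rintro m ⟨H, ⟨Γ, hΓ, rfl⟩, rfl⟩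
    exact ⟨_, ⟨Γ, hKsub hΓ, rfl⟩, rfl⟩
  · rintro M ⟨H, ⟨Γ, hΓ, rfl⟩, rfl⟩
    have h1 : Pc (y' • lam + b) = (Hmat Γ).mulVec (y' • lam + b) :=
      proj_eq_Hmat_mulVec (y' • lam + b) hΓ
    have h2 : Pc (y • lam + b) = (Hmat Γ).mulVec (y • lam + b) :=
      proj_eq_Hmat_mulVec (y • lam + b) (hKsub hΓ)
    have hvec : Pc (y' • lam + b) - Pc (y • lam + b)
        = (y' - y) • (Hmat Γ).mulVec lam := by
      rw [h1, h2, ← Matrix.mulVec_sub]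
      have e : (y' • lam + b) - (y • lam + b) = (y' - y) • lam := by
        funext j
        simp only [Pi.sub_apply, Pi.add_apply, Pi.smul_apply, smul_eq_mul]
        ring
      rw [e, Matrix.mulVec_smul]
    have hψ : (∑ i, Pc (y' • lam + b) i * lam i) - (∑ i, Pc (y • lam + b) i * lam i)
        = dotProduct lam ((Hmat Γ).mulVec lam) * (y' - y) := by
      rw [← Finset.sum_sub_distrib]
      have e : ∀ i, Pc (y' • lam + b) i * lam i - Pc (y • lam + b) i * lam i
          = (y' - y) * ((Hmat Γ).mulVec lam i * lam i) := by
        intro i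
        have hc := congrFun hvec i
        simp only [Pi.sub_apply, Pi.smul_apply, smul_eq_mul] at hc
        rw [← sub_mul, hc]
        ring
      rw [Finset.sum_congr rfl (fun i _ => e i), ← Finset.mul_sum]
      have hdot : dotProduct lam ((Hmat Γ).mulVec lam)
          = ∑ i, (Hmat Γ).mulVec lam i * lam i := by
        simp only [dotProduct]
        exact Finset.sum_congr rfl fun i _ => mul_comm _ _
      rw [hdot]
      ring
    simp only [psiFun]
    linear_combination hψ
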